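/- Let τ ⊆ ℤ×ℤ be a skew shape. Define Rem_τ to be the set of pairs (u,v) of nodes of τ lying in the same connected component of τ with u ↗ v, u+(1,0) ∉ τ and v+(0,1) ∉ τ; for (u,v) ∈ Rem_τ set ξ^τ_{u,v} = {w ∈ τ : u ↗ w ↗ v and w+(1,1) ∉ τ}. Then {ξ^τ_{u,v} : (u,v) ∈ Rem_τ} is exactly the set of SE-removable ribbons in τ. -/

import Mathlib

open Finset

abbrev Node : Type := ℤ × ℤ

/-- `v` is weakly southeast of `u` (product order). -/
def SE (u v : Node) : Prop := u.1 ≤ v.1 ∧ u.2 ≤ v.2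

/-- `v` is weakly northeast of `u` (`u ↗ v`). -/
def NEr (u v : Node) : Prop := v.1 ≤ u.1 ∧ u.2 ≤ v.2

/-- `v` is strictly northeast of `u` (`u ⇗ v`). -/
def SNE (u v : Node) : Prop := v.1 < u.1 ∧ u.2 < v.2

def IsSkew (τ : Finset Node) : Prop :=
  ∀ u ∈ τ, ∀ w ∈ τ, ∀ v : Node, SE u v → SE v w → v ∈ τ

def Adj (u v : Node) : Prop :=
  v = u + (1, 0) ∨ v = u + (-1, 0) ∨ v = u + (0, 1) ∨ v = u + (0, -1)

def PathIn (τ : Finset Node) (u v : Node) : Prop :=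
  Relation.ReflTransGen (fun a b => a ∈ τ ∧ b ∈ τ ∧ Adj a b) u v

def IsConnectedShape (τ : Finset Node) : Prop :=
  ∀ u ∈ τ, ∀ v ∈ τ, PathIn τ u v

def Cornered (τ : Finset Node) : Prop :=
  (∀ u ∈ τ, ∀ u' ∈ τ, (u + (1, 0) ∉ τ ∧ u + (0, -1) ∉ τ) →
      (u' + (1, 0) ∉ τ ∧ u' + (0, -1) ∉ τ) → u = u') ∧
  (∀ v ∈ τ, ∀ v' ∈ τ, (v + (-1, 0) ∉ τ ∧ v + (0, 1) ∉ τ) →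
      (v' + (-1, 0) ∉ τ ∧ v' + (0, 1) ∉ τ) → v = v')

def DiagConvex (τ : Finset Node) : Prop :=
  ∀ u ∈ τ, ∀ w ∈ τ, ∀ v : Node,
    u.2 - u.1 = v.2 - v.1 → v.2 - v.1 = w.2 - w.1 → SE u v → SE v w → v ∈ τ

def Thin (τ : Finset Node) : Prop :=
  ∀ u ∈ τ, ∀ v ∈ τ, u.2 - u.1 = v.2 - v.1 → u = v

def IsRibbon (ξ : Finset Node) : Prop :=
  ξ.Nonempty ∧ IsSkew ξ ∧ IsConnectedShape ξ ∧ Thin ξ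

def MaxSW (τ : Finset Node) (u : Node) : Prop :=
  u ∈ τ ∧ ∀ v ∈ τ, NEr v u → v = u

def MaxNE (τ : Finset Node) (v : Node) : Prop :=
  v ∈ τ ∧ ∀ w ∈ τ, NEr v w → w = v

def IsNEPath (z : ℕ → Node) (k : ℕ) : Prop :=
  ∀ i, i + 1 < k → z (i + 1) = z i + (-1, 0) ∨ z (i + 1) = z i + (0, 1)

def IsSEPath (z : ℕ → Node) (k : ℕ) : Prop :=
  ∀ i, i + 1 < k → z (i + 1) = z i + (1, 0) ∨ z (i + 1) = z i + (0, 1)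

def SERemovable (τ μ : Finset Node) : Prop :=
  μ ⊆ τ ∧ ∀ u ∈ μ, ∀ v ∈ τ \ μ, ¬ SE u v


lemma node_add (a : Node) (x y : ℤ) : a + (x, y) = (a.1 + x, a.2 + y) := rfl

lemma adj_symm {a b : Node} (h : Adj a b) : Adj b a := by
  rcases h with h|h|h|h <;> subst h <;>
    simp [Adj, node_add, Prod.ext_iff] <;> omega

lemma adj_diag {a b : Node} (h : Adj a b) :
    b.2 - b.1 = a.2 - a.1 + 1 ∨ b.2 - b.1 = a.2 - a.1 - 1 := by
  rcases h with h|h|h|h <;> subst h <;> simp [node_add] <;> omega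

lemma pathIn_symm {τ : Finset Node} {a b : Node} (h : PathIn τ a b) : PathIn τ b a := by
  induction h with
  | refl => exact .refl
  | tail _ h2 ih => exact Relation.ReflTransGen.head ⟨h2.2.1, h2.1, adj_symm h2.2.2⟩ ih

lemma pathIn_mono {σ τ : Finset Node} {a b : Node} (hs : σ ⊆ τ) (h : PathIn σ a b) :
    PathIn τ a b := by
  induction h with
  | refl => exact .refl
  | tail _ h2 ih => exact ih.tail ⟨hs h2.1, hs h2.2.1, h2.2.2⟩

lemma diag_ivt {τ : Finset Node} {a b : Node} (ha : a ∈ τ) (h : PathIn τ a b) :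
    ∀ d : ℤ, ((a.2 - a.1 ≤ d ∧ d ≤ b.2 - b.1) ∨ (b.2 - b.1 ≤ d ∧ d ≤ a.2 - a.1)) →
    ∃ m ∈ τ, m.2 - m.1 = d := by
  induction h with
  | refl => intro d hd; exact ⟨a, ha, by omega⟩
  | tail _ h2 ih =>
    intro d hd
    rename_i c b _
    by_cases hdb : d = b.2 - b.1
    · exact ⟨b, h2.2.1, hdb.symm⟩
    · apply ih d; rcases adj_diag h2.2.2 with h|h <;> omega

lemma ner_of_diag_le {μ : Finset Node} (hs : IsSkew μ) (ht : Thin μ)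
    {a b : Node} (ha : a ∈ μ) (hb : b ∈ μ) (hd : a.2 - a.1 ≤ b.2 - b.1) : NEr a b := by
  constructor
  · by_contra hx
    push_neg at hx
    have hc : ((b.1, a.2 + (b.1 - a.1)) : Node) ∈ μ :=
      hs a ha b hb _ ⟨by omega, by simp; omega⟩ ⟨le_refl _, by simp; omega⟩
    have := ht a ha _ hc (by simp; omega)
    rw [Prod.ext_iff] at this
    simp at this; omega
  · by_contra hx
    push_neg at hx
    have hc : ((b.1 + (a.2 - b.2), a.2) : Node) ∈ μ :=
      hs b hb a ha _ ⟨by simp; omega, by omega⟩ ⟨by simp; omega, le_refl _⟩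
    have := ht b hb _ hc (by simp; omega)
    rw [Prod.ext_iff] at this
    simp at this; omega

open Classical in
theorem stmt10 (τ : Finset Node) (hτ : IsSkew τ) (μ : Finset Node) :
    (IsRibbon μ ∧ SERemovable τ μ) ↔
      ∃ u v : Node, u ∈ τ ∧ v ∈ τ ∧ PathIn τ u v ∧ NEr u v ∧
        u + (1, 0) ∉ τ ∧ v + (0, 1) ∉ τ ∧
        μ = τ.filter (fun w => NEr u w ∧ NEr w v ∧ w + (1, 1) ∉ τ) := by
  constructor
  · rintro ⟨⟨hne, hskew, hconn, hthin⟩, hsub, hrem⟩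
    obtain ⟨u, hu, humin⟩ := μ.exists_min_image (fun w => w.2 - w.1) hne
    obtain ⟨v, hv, hvmax⟩ := μ.exists_max_image (fun w => w.2 - w.1) hne
    have hu10 : u + (1, 0) ∉ τ := by
      intro hmem
      have hse : SE u (u + (1, 0)) := by constructor <;> simp [node_add]
      by_cases h : u + (1, 0) ∈ μ
      · have := humin _ h; simp [node_add] at this <;> omega
      · exact hrem u hu _ (Finset.mem_sdiff.2 ⟨hmem, h⟩) hse
    have hv01 : v + (0, 1) ∉ τ := by
      intro hmem
      have hse : SE v (v + (0, 1)) := by constructor <;> simp [node_add]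
      by_cases h : v + (0, 1) ∈ μ
      · have := hvmax _ h; simp [node_add] at this <;> omega
      · exact hrem v hv _ (Finset.mem_sdiff.2 ⟨hmem, h⟩) hse
    refine ⟨u, v, hsub hu, hsub hv, pathIn_mono hsub (hconn u hu v hv),
      ner_of_diag_le hskew hthin hu hv (hvmax u hu), hu10, hv01, ?_⟩
    ext w
    simp only [Finset.mem_filter]
    constructor
    · intro hw
      refine ⟨hsub hw, ner_of_diag_le hskew hthin hu hw (humin w hw),
        ner_of_diag_le hskew hthin hw hv (hvmax w hw), ?_⟩
      intro hmem
      have hse : SE w (w + (1, 1)) := by constructor <;> simp [node_add]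
      by_cases h : w + (1, 1) ∈ μ
      · have := hthin w hw _ h (by simp [node_add] <;> omega)
        rw [Prod.ext_iff] at this; simp [node_add] at this <;> omega
      · exact hrem w hw _ (Finset.mem_sdiff.2 ⟨hmem, h⟩) hse
    · rintro ⟨hwτ, hnuw, hnwv, h11⟩
      have hdlo : u.2 - u.1 ≤ w.2 - w.1 := by
        obtain ⟨h1, h2⟩ := hnuw; omega
      have hdhi : w.2 - w.1 ≤ v.2 - v.1 := by
        obtain ⟨h1, h2⟩ := hnwv; omega
      obtain ⟨m, hm, hmd⟩ := diag_ivt hu (hconn u hu v hv) (w.2 - w.1) (Or.inl ⟨hdlo, hdhi⟩)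
      rcases lt_trichotomy m.1 w.1 with ht | ht | ht
      · -- m strictly NW... m.1 < w.1, same diag so m.2 < w.2 : SE m w
        by_contra hwμ
        exact hrem m hm w (Finset.mem_sdiff.2 ⟨hwτ, hwμ⟩) ⟨le_of_lt ht, by omega⟩
      · have : m = w := Prod.ext ht (by omega)
        exact this ▸ hm
      · -- w strictly NW of m: w+(1,1) between
        exact absurd (hτ w hwτ m (hsub hm) (w + (1, 1))
          ⟨by simp [node_add], by simp [node_add]⟩
          ⟨by simp [node_add]; omega, by simp [node_add]; omega⟩) h11
  · rintro ⟨u, v, huτ, hvτ, hpath, hnuv, hu10, hv01, rfl⟩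
    set ξ := τ.filter (fun w => NEr u w ∧ NEr w v ∧ w + (1, 1) ∉ τ) with hξ
    have hmemξ : ∀ w : Node, w ∈ ξ ↔ w ∈ τ ∧ NEr u w ∧ NEr w v ∧ w + (1, 1) ∉ τ := by
      intro w; simp [hξ]
    have h11u : u + (1, 1) ∉ τ := by
      intro h
      exact hu10 (hτ u huτ _ h (u + (1, 0))
        ⟨by simp [node_add], by simp [node_add]⟩
        ⟨by simp [node_add], by simp [node_add]⟩)
    have h11v : v + (1, 1) ∉ τ := by
      intro h
      exact hv01 (hτ v hvτ _ h (v + (0, 1))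
        ⟨by simp [node_add], by simp [node_add]⟩
        ⟨by simp [node_add], by simp [node_add]⟩)
    have huξ : u ∈ ξ := (hmemξ u).2 ⟨huτ, ⟨le_refl _, le_refl _⟩, hnuv, h11u⟩
    have hvξ : v ∈ ξ := (hmemξ v).2 ⟨hvτ, hnuv, ⟨le_refl _, le_refl _⟩, h11v⟩
    have hskewξ : IsSkew ξ := by
      intro w hw w' hw' c hse1 hse2
      obtain ⟨hsA, hsB⟩ := hse1
      obtain ⟨hsC, hsD⟩ := hse2
      rw [hmemξ] at hw hw' ⊢
      obtain ⟨hwτ, hw1, hw2, hw3⟩ := hw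
      obtain ⟨hw'τ, hw'1, hw'2, hw'3⟩ := hw'
      refine ⟨hτ w hwτ w' hw'τ c ⟨hsA, hsB⟩ ⟨hsC, hsD⟩,
        ⟨le_trans hsC hw'1.1, le_trans hw1.2 hsB⟩,
        ⟨le_trans hw2.1 hsA, le_trans hsD hw'2.2⟩, ?_⟩
      intro h
      exact hw3 (hτ w hwτ _ h (w + (1, 1))
        ⟨by simp [node_add], by simp [node_add]⟩
        ⟨by simp [node_add]; omega, by simp [node_add]; omega⟩)
    have hthinξ : Thin ξ := by
      intro w hw w' hw' hd
      rw [hmemξ] at hw hw'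
      rcases lt_trichotomy w.1 w'.1 with ht | ht | ht
      · exact absurd (hτ w hw.1 w' hw'.1 (w + (1, 1))
          ⟨by simp [node_add], by simp [node_add]⟩
          ⟨by simp [node_add]; omega, by simp [node_add]; omega⟩) hw.2.2.2
      · exact Prod.ext ht (by omega)
      · exact absurd (hτ w' hw'.1 w hw.1 (w' + (1, 1))
          ⟨by simp [node_add], by simp [node_add]⟩
          ⟨by simp [node_add]; omega, by simp [node_add]; omega⟩) hw'.2.2.2
    have hdiag : ∀ d : ℤ, u.2 - u.1 ≤ d → d ≤ v.2 - v.1 → ∃ z ∈ ξ, z.2 - z.1 = d := by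
      intro d hd1 hd2
      obtain ⟨m, hm, hmd⟩ := diag_ivt huτ hpath d (Or.inl ⟨hd1, hd2⟩)
      classical
      set T := τ.filter (fun w => w.2 - w.1 = d ∧ SE m w) with hT
      have hmT : m ∈ T := by rw [hT, Finset.mem_filter]; exact ⟨hm, hmd, le_refl _, le_refl _⟩
      obtain ⟨z, hzT, hzmax⟩ := T.exists_max_image (fun w => w.1) ⟨m, hmT⟩
      rw [hT, Finset.mem_filter] at hzT
      obtain ⟨hzτ, hzd, hmz⟩ := hzT
      have hz11 : z + (1, 1) ∉ τ := by
        intro h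
        have : z + (1, 1) ∈ T := by
          rw [hT, Finset.mem_filter]
          exact ⟨h, by simp [node_add]; omega, ⟨by simp [node_add]; exact le_trans hmz.1 (by omega),
            by simp [node_add]; exact le_trans hmz.2 (by omega)⟩⟩
        have := hzmax _ this
        simp [node_add] at this
      have hz1u : z.1 ≤ u.1 := by
        by_contra hx
        push_neg at hx
        have hz2u : u.2 < z.2 := by omega
        exact hu10 (hτ u huτ z hzτ (u + (1, 0))
          ⟨by simp [node_add], by simp [node_add]⟩
          ⟨by simp [node_add]; omega, by simp [node_add]; omega⟩)
      have hz2u : u.2 ≤ z.2 := by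
        by_contra hx
        push_neg at hx
        have : z.1 < u.1 := by omega
        exact hz11 (hτ z hzτ u huτ (z + (1, 1))
          ⟨by simp [node_add], by simp [node_add]⟩
          ⟨by simp [node_add]; omega, by simp [node_add]; omega⟩)
      have hz2v : z.2 ≤ v.2 := by
        by_contra hx
        push_neg at hx
        have : v.1 < z.1 := by omega
        exact hv01 (hτ v hvτ z hzτ (v + (0, 1))
          ⟨by simp [node_add], by simp [node_add]⟩
          ⟨by simp [node_add]; omega, by simp [node_add]; omega⟩)
      have hz1v : v.1 ≤ z.1 := by
        by_contra hx
        push_neg at hx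
        have : z.2 < v.2 := by omega
        exact hz11 (hτ z hzτ v hvτ (z + (1, 1))
          ⟨by simp [node_add], by simp [node_add]⟩
          ⟨by simp [node_add]; omega, by simp [node_add]; omega⟩)
      exact ⟨z, (hmemξ z).2 ⟨hzτ, ⟨hz1u, hz2u⟩, ⟨hz1v, hz2v⟩, hz11⟩, hzd⟩
    have hstep : ∀ z ∈ ξ, ∀ z' ∈ ξ, z'.2 - z'.1 = z.2 - z.1 + 1 → Adj z z' := by
      intro z hz z' hz' hd
      have hner : NEr z z' := ner_of_diag_le hskewξ hthinξ hz hz' (by omega)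
      obtain ⟨h1, h2⟩ := hner
      rcases lt_trichotomy z'.1 z.1 with ht | ht | ht
      · right; left
        exact Prod.ext (by simp [node_add]; omega) (by simp [node_add]; omega)
      · right; right; left
        exact Prod.ext (by simp [node_add]; omega) (by simp [node_add]; omega)
      · omega
    have hrange : ∀ w ∈ ξ, u.2 - u.1 ≤ w.2 - w.1 ∧ w.2 - w.1 ≤ v.2 - v.1 := by
      intro w hw
      rw [hmemξ] at hw
      obtain ⟨_, ⟨a1, a2⟩, ⟨b1, b2⟩, _⟩ := hw
      omega
    have hchain : ∀ n : ℕ, ∀ w ∈ ξ, ∀ w' ∈ ξ, w'.2 - w'.1 = w.2 - w.1 + n → PathIn ξ w w' := by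
      intro n
      induction n with
      | zero =>
        intro w hw w' hw' hd
        have : w = w' := hthinξ w hw w' hw' (by omega)
        exact this ▸ Relation.ReflTransGen.refl
      | succ n ih =>
        intro w hw w' hw' hd
        obtain ⟨z, hz, hzd⟩ := hdiag (w.2 - w.1 + n)
          (by have := (hrange w hw).1; omega)
          (by have := (hrange w' hw').2; omega)
        exact (ih w hw z hz hzd).tail ⟨hz, hw', hstep z hz w' hw' (by omega)⟩
    have hconnξ : IsConnectedShape ξ := by
      intro w hw w' hw'
      rcases le_or_gt (w.2 - w.1) (w'.2 - w'.1) with h | h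
      · obtain ⟨n, hn⟩ : ∃ n : ℕ, w'.2 - w'.1 = w.2 - w.1 + n :=
          ⟨(w'.2 - w'.1 - (w.2 - w.1)).toNat, by omega⟩
        exact hchain n w hw w' hw' hn
      · obtain ⟨n, hn⟩ : ∃ n : ℕ, w.2 - w.1 = w'.2 - w'.1 + n :=
          ⟨(w.2 - w.1 - (w'.2 - w'.1)).toNat, by omega⟩
        exact pathIn_symm (hchain n w' hw' w hw hn)
    refine ⟨⟨⟨u, huξ⟩, hskewξ, hconnξ, hthinξ⟩, Finset.filter_subset _ _, ?_⟩
    intro w hw c hc hse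
    obtain ⟨hseA, hseB⟩ := hse
    rw [Finset.mem_sdiff] at hc
    obtain ⟨hcτ, hcξ⟩ := hc
    rw [hmemξ] at hw
    obtain ⟨hwτ, ⟨hw1, hw2⟩, ⟨hw3, hw4⟩, hw5⟩ := hw
    apply hcξ
    rw [hmemξ]
    refine ⟨hcτ, ⟨?_, le_trans hw2 hseB⟩, ⟨le_trans hw3 hseA, ?_⟩, ?_⟩
    · by_contra hx
      push_neg at hx
      exact hu10 (hτ u huτ c hcτ (u + (1, 0))
        ⟨by simp [node_add], by simp [node_add]⟩
        ⟨by simp [node_add]; omega, by simp [node_add]; exact le_trans hw2 hseB⟩)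
    · by_contra hx
      push_neg at hx
      exact hv01 (hτ v hvτ c hcτ (v + (0, 1))
        ⟨by simp [node_add], by simp [node_add]⟩
        ⟨by simp [node_add]; exact le_trans hw3 hseA, by simp [node_add]; omega⟩)
    · intro h
      exact hw5 (hτ w hwτ _ h (w + (1, 1))
        ⟨by simp [node_add], by simp [node_add]⟩
        ⟨by simp [node_add]; omega, by simp [node_add]; omega⟩)
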